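/- Let (H, α, σ) be a unicellular map with face γ = ασ and root r. For a half-edge i, set j = σ^{-1}ασ(i). If i is an up-step (i <_m σ(i)), then j is a down-step (σ(j) ≤_m j). -/
import Mathlib


open Equiv

/-- in a rooted unicellular map `(H, α, σ)` with face
`γ = ασ` and order `<ₘ` encoded by `ord : Fin (2n) ≃ H`, for a half-edge
`i` set `j = σ⁻¹(α(σ(i)))`.  If `i` is an up-step (`i <ₘ σ(i)`) then `j`
is a down-step (`σ(j) ≤ₘ j`). -/
theorem upstep_gives_downstep {H : Type*} [Fintype H] [DecidableEq H]
    (n : ℕ) (hn : 1 ≤ n) (hcard : Fintype.card H = 2 * n)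
    (α σ : Equiv.Perm H)
    (hinv : α * α = 1) (hfp : ∀ h : H, α h ≠ h)
    (hface : (α * σ).IsCycle ∧ (α * σ).support = Finset.univ)
    (r : H) (ord : Fin (2 * n) ≃ H)
    (hord0 : ord ⟨0, by omega⟩ = r)
    (hordsucc : ∀ k : Fin (2 * n), (α * σ) (ord k) = ord (k + ⟨1, by omega⟩))
    (i j : H) (hj : j = σ⁻¹ (α (σ i)))
    (hup : ord.symm i < ord.symm (σ i)) :
    ord.symm (σ j) ≤ ord.symm j := by
  haveI : NeZero (2 * n) := ⟨by omega⟩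
  set a := ord.symm i with ha
  set b := ord.symm (σ i) with hb
  have hia : i = ord a := (ord.apply_symm_apply i).symm
  have hsib : σ i = ord b := (ord.apply_symm_apply (σ i)).symm
  -- σ j = (α * σ) i = ord (a + 1)
  have hsj : σ j = ord (a + ⟨1, by omega⟩) := by
    have := hordsucc a
    rw [← hia] at this
    rw [hj]
    simpa [Perm.mul_apply] using this
  -- (α * σ) j = σ i
  have hgj : (α * σ) j = σ i := by
    have : α (α (σ i)) = σ i := by
      have := congrArg (fun p => p (σ i)) hinv
      simpa [Perm.mul_apply] using this
    simp [hj, Perm.mul_apply, this]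
  -- j = ord (b - 1)
  have hjb : j = ord (b - ⟨1, by omega⟩) := by
    have h1 : (α * σ) (ord (b - ⟨1, by omega⟩)) = ord b := by
      rw [hordsucc (b - ⟨1, by omega⟩), sub_add_cancel]
    have h2 : (α * σ) j = ord b := by rw [hgj, hsib]
    exact (α * σ).injective (h2.trans h1.symm)
  have hab : (a : ℕ) < (b : ℕ) := hup
  have hbu : (b : ℕ) < 2 * n := b.isLt
  -- b ≠ a + 1, hence a + 2 ≤ b
  have hb2 : (a : ℕ) + 2 ≤ (b : ℕ) := by
    by_contra hcon
    have hbeq : (b : ℕ) = (a : ℕ) + 1 := by omega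
    have hbfin : b = a + ⟨1, by omega⟩ := by
      apply Fin.ext
      rw [Fin.add_def]
      show (b : ℕ) = ((a : ℕ) + 1) % (2 * n)
      rw [Nat.mod_eq_of_lt (by omega)]
      exact hbeq
    apply hfp (σ i)
    have h3 : ord (a + ⟨1, by omega⟩) = α (σ i) := by
      rw [← hordsucc a, ← hia]; rfl
    rw [← h3, ← hbfin, ← hsib]
  -- compute the values
  have hA : (a + (⟨1, by omega⟩ : Fin (2 * n))).val = (a : ℕ) + 1 := by
    rw [Fin.add_def]
    show ((a : ℕ) + 1) % (2 * n) = (a : ℕ) + 1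
    exact Nat.mod_eq_of_lt (by omega)
  have hB : (b - (⟨1, by omega⟩ : Fin (2 * n))).val = (b : ℕ) - 1 := by
    rw [Fin.sub_def]
    show (2 * n - 1 + (b : ℕ)) % (2 * n) = (b : ℕ) - 1
    have h4 : 2 * n - 1 + (b : ℕ) = 2 * n + ((b : ℕ) - 1) := by omega
    rw [h4, Nat.add_mod_left]
    exact Nat.mod_eq_of_lt (by omega)
  rw [hsj, hjb, ord.symm_apply_apply, ord.symm_apply_apply]
  rw [Fin.le_def, hA, hB]
  omega
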